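/- Let N ≥ 1 and let p, p̄ : {1,…,N}² → ℂ be systems of nonzero parameters satisfying p_{ij}·p̄_{ji} = 1 for all i,j. Let A be the quotient of the free associative unital ℂ-algebra on the 4N generators {K_i, K̄_i, e_i, f_i : 1 ≤ i ≤ N} by the two-sided ideal generated by the elements: K_iK_j − K_jK_i, K̄_iK̄_j − K̄_jK̄_i, K_iK̄_j − K̄_jK_i (all i,j); K_ie_j − p_{ij}·e_jK_i, K̄_ie_j − p̄_{ij}·e_jK̄_i, K_if_j − p_{ij}^{-1}·f_jK_i, K̄_if_j − p̄_{ij}^{-1}·f_jK̄_i (all i,j); and e_if_j − f_je_i − δ_{ij}(K_i − K̄_i) (all i,j). Then: (1) there exists a unique ℂ-algebra homomorphism Δ : A → A ⊗_ℂ A with Δ(K_i) = K_i⊗K_i, Δ(K̄_i) = K̄_i⊗K̄_i, Δ(e_i) = 1⊗e_i + e_i⊗K_i, Δ(f_i) = K̄_i⊗f_i + f_i⊗1; (2) there exists a unique ℂ-algebra homomorphism ε : A → ℂ with ε(K_i) = ε(K̄_i) = 1 and ε(e_i) = ε(f_i) = 0; (3) Δ is coassociative, i.e., (Δ⊗id)∘Δ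 = (id⊗Δ)∘Δ, and ε is a counit for Δ, i.e., (ε⊗id)∘Δ = id = (id⊗ε)∘Δ under the canonical identifications ℂ⊗A ≅ A ≅ A⊗ℂ. -/

import Mathlib

noncomputable section

open scoped TensorProduct

/-- Generators `K_i, K̄_i, e_i, f_i` of the generalized Drinfel'd–Jimbo algebra. -/
inductive DJGen (N : ℕ) : Type
  | K : Fin N → DJGen N
  | Kb : Fin N → DJGen N
  | e : Fin N → DJGen N
  | f : Fin N → DJGen N

/-- The image of a generator in the free algebra. -/
def g {N : ℕ} (x : DJGen N) : FreeAlgebra ℂ (DJGen N) := FreeAlgebra.ι ℂ x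

/-- The defining relations of the generalized Drinfel'd–Jimbo algebra: identifying the
two sides of each relation generates exactly the two-sided ideal generated by the listed
differences. -/
inductive djRel (N : ℕ) (p pb : Fin N → Fin N → ℂ) :
    FreeAlgebra ℂ (DJGen N) → FreeAlgebra ℂ (DJGen N) → Prop
  | KK (i j : Fin N) : djRel N p pb (g (.K i) * g (.K j)) (g (.K j) * g (.K i))
  | KbKb (i j : Fin N) : djRel N p pb (g (.Kb i) * g (.Kb j)) (g (.Kb j) * g (.Kb i))
  | KKb (i j : Fin N) : djRel N p pb (g (.K i) * g (.Kb j)) (g (.Kb j) * g (.K i))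
  | Ke (i j : Fin N) : djRel N p pb (g (.K i) * g (.e j)) (p i j • (g (.e j) * g (.K i)))
  | Kbe (i j : Fin N) : djRel N p pb (g (.Kb i) * g (.e j)) (pb i j • (g (.e j) * g (.Kb i)))
  | Kf (i j : Fin N) : djRel N p pb (g (.K i) * g (.f j)) ((p i j)⁻¹ • (g (.f j) * g (.K i)))
  | Kbf (i j : Fin N) : djRel N p pb (g (.Kb i) * g (.f j)) ((pb i j)⁻¹ • (g (.f j) * g (.Kb i)))
  | ef (i j : Fin N) : djRel N p pb (g (.e i) * g (.f j) - g (.f j) * g (.e i))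
      (if i = j then g (.K i) - g (.Kb i) else 0)

/-- The generalized Drinfel'd–Jimbo algebra `A`: the quotient of the free algebra on the
`4N` generators by the two-sided ideal generated by the relations. -/
abbrev DJAlg (N : ℕ) (p pb : Fin N → Fin N → ℂ) : Type := RingQuot (djRel N p pb)

/-- The image of a generator in `A`. -/
def gen {N : ℕ} (p pb : Fin N → Fin N → ℂ) (x : DJGen N) : DJAlg N p pb :=
  RingQuot.mkAlgHom ℂ (djRel N p pb) (g x)

namespace DJaux
variable {N : ℕ} (p pb : Fin N → Fin N → ℂ) (hcomp : ∀ i j, p i j * pb j i = 1)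

lemma gm (x y : DJGen N) : gen p pb x * gen p pb y =
    RingQuot.mkAlgHom ℂ (djRel N p pb) (g x * g y) := by simp [gen, map_mul]

lemma relKK (i j : Fin N) :
    gen p pb (.K i) * gen p pb (.K j) = gen p pb (.K j) * gen p pb (.K i) := by
  rw [gm, gm]; exact RingQuot.mkAlgHom_rel ℂ (djRel.KK i j)

lemma relKbKb (i j : Fin N) :
    gen p pb (.Kb i) * gen p pb (.Kb j) = gen p pb (.Kb j) * gen p pb (.Kb i) := by
  rw [gm, gm]; exact RingQuot.mkAlgHom_rel ℂ (djRel.KbKb i j)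

lemma relKKb (i j : Fin N) :
    gen p pb (.K i) * gen p pb (.Kb j) = gen p pb (.Kb j) * gen p pb (.K i) := by
  rw [gm, gm]; exact RingQuot.mkAlgHom_rel ℂ (djRel.KKb i j)

lemma relKe (i j : Fin N) :
    gen p pb (.K i) * gen p pb (.e j) = p i j • (gen p pb (.e j) * gen p pb (.K i)) := by
  rw [gm, gm, ← map_smul]; exact RingQuot.mkAlgHom_rel ℂ (djRel.Ke i j)

lemma relKbe (i j : Fin N) :
    gen p pb (.Kb i) * gen p pb (.e j) = pb i j • (gen p pb (.e j) * gen p pb (.Kb i)) := by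
  rw [gm, gm, ← map_smul]; exact RingQuot.mkAlgHom_rel ℂ (djRel.Kbe i j)

lemma relKf (i j : Fin N) :
    gen p pb (.K i) * gen p pb (.f j) = (p i j)⁻¹ • (gen p pb (.f j) * gen p pb (.K i)) := by
  rw [gm, gm, ← map_smul]; exact RingQuot.mkAlgHom_rel ℂ (djRel.Kf i j)

lemma relKbf (i j : Fin N) :
    gen p pb (.Kb i) * gen p pb (.f j) = (pb i j)⁻¹ • (gen p pb (.f j) * gen p pb (.Kb i)) := by
  rw [gm, gm, ← map_smul]; exact RingQuot.mkAlgHom_rel ℂ (djRel.Kbf i j)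

lemma relef (i j : Fin N) :
    gen p pb (.e i) * gen p pb (.f j) - gen p pb (.f j) * gen p pb (.e i) =
      if i = j then gen p pb (.K i) - gen p pb (.Kb i) else 0 := by
  have h := RingQuot.mkAlgHom_rel ℂ (djRel.ef (N := N) (p := p) (pb := pb) i j)
  rcases eq_or_ne i j with hij | hij
  · simpa [hij, gm, map_sub, gen] using h
  · simpa [hij, gm, map_sub] using h

lemma hom_ext {B : Type} [Semiring B] [Algebra ℂ B] {f₁ f₂ : DJAlg N p pb →ₐ[ℂ] B}
    (h : ∀ x, f₁ (gen p pb x) = f₂ (gen p pb x)) : f₁ = f₂ := by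
  apply RingQuot.ringQuot_ext'
  apply FreeAlgebra.hom_ext
  funext x
  simpa [g, gen] using h x

open Algebra.TensorProduct in
def dval (x : DJGen N) : DJAlg N p pb ⊗[ℂ] DJAlg N p pb :=
  match x with
  | .K i => gen p pb (.K i) ⊗ₜ[ℂ] gen p pb (.K i)
  | .Kb i => gen p pb (.Kb i) ⊗ₜ[ℂ] gen p pb (.Kb i)
  | .e i => 1 ⊗ₜ[ℂ] gen p pb (.e i) + gen p pb (.e i) ⊗ₜ[ℂ] gen p pb (.K i)
  | .f i => gen p pb (.Kb i) ⊗ₜ[ℂ] gen p pb (.f i) + gen p pb (.f i) ⊗ₜ[ℂ] 1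

def ΔF : FreeAlgebra ℂ (DJGen N) →ₐ[ℂ] DJAlg N p pb ⊗[ℂ] DJAlg N p pb :=
  FreeAlgebra.lift ℂ (dval p pb)

lemma ΔF_g (x : DJGen N) : ΔF p pb (g x) = dval p pb x := by
  simp [ΔF, g]

lemma ΔF_rel (hcomp : ∀ i j, p i j * pb j i = 1) {a b : FreeAlgebra ℂ (DJGen N)}
    (h : djRel N p pb a b) : ΔF p pb a = ΔF p pb b := by
  induction h with
  | KK i j =>
      simp only [map_mul, ΔF_g, dval, Algebra.TensorProduct.tmul_mul_tmul, relKK]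
  | KbKb i j =>
      simp only [map_mul, ΔF_g, dval, Algebra.TensorProduct.tmul_mul_tmul, relKbKb]
  | KKb i j =>
      simp only [map_mul, ΔF_g, dval, Algebra.TensorProduct.tmul_mul_tmul, relKKb]
  | Ke i j =>
      simp only [map_mul, map_smul, ΔF_g, dval, mul_add, add_mul, smul_add,
        Algebra.TensorProduct.tmul_mul_tmul, one_mul, mul_one,
        relKe p pb i j, relKK p pb i j, TensorProduct.tmul_smul, TensorProduct.smul_tmul']
  | Kbe i j =>
      simp only [map_mul, map_smul, ΔF_g, dval, mul_add, add_mul, smul_add,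
        Algebra.TensorProduct.tmul_mul_tmul, one_mul, mul_one,
        relKbe p pb i j, ← relKKb p pb j i, TensorProduct.tmul_smul, TensorProduct.smul_tmul']
  | Kf i j =>
      simp only [map_mul, map_smul, ΔF_g, dval, mul_add, add_mul, smul_add,
        Algebra.TensorProduct.tmul_mul_tmul, one_mul, mul_one,
        relKf p pb i j, relKKb p pb i j, TensorProduct.tmul_smul, TensorProduct.smul_tmul']
  | Kbf i j =>
      simp only [map_mul, map_smul, ΔF_g, dval, mul_add, add_mul, smul_add,
        Algebra.TensorProduct.tmul_mul_tmul, one_mul, mul_one,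
        relKbf p pb i j, relKbKb p pb i j, TensorProduct.tmul_smul, TensorProduct.smul_tmul']
  | ef i j =>
      have hmid : (gen p pb (.e i) * gen p pb (.Kb j)) ⊗ₜ[ℂ]
            (gen p pb (.K i) * gen p pb (.f j)) =
          (gen p pb (.Kb j) * gen p pb (.e i)) ⊗ₜ[ℂ]
            (gen p pb (.f j) * gen p pb (.K i)) := by
        rw [relKf, relKbe, TensorProduct.tmul_smul, TensorProduct.smul_tmul',
          inv_eq_of_mul_eq_one_right (hcomp i j)]
      have hef := relef p pb i j
      rcases eq_or_ne i j with hij | hij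
      · subst hij
        rw [if_pos rfl] at hef ⊢
        have hEF : gen p pb (.e i) * gen p pb (.f i) =
            gen p pb (.f i) * gen p pb (.e i) + (gen p pb (.K i) - gen p pb (.Kb i)) := by
          rw [add_comm]; exact sub_eq_iff_eq_add.mp hef
        simp only [map_sub, map_mul, ΔF_g, dval, mul_add, add_mul,
          Algebra.TensorProduct.tmul_mul_tmul, one_mul, mul_one]
        rw [hmid, hEF]
        simp only [TensorProduct.tmul_add, TensorProduct.add_tmul,
          TensorProduct.tmul_sub, TensorProduct.sub_tmul]
        abel
      · rw [if_neg hij] at hef ⊢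
        have hEF := sub_eq_zero.mp hef
        simp only [map_sub, map_mul, map_zero, ΔF_g, dval, mul_add, add_mul,
          Algebra.TensorProduct.tmul_mul_tmul, one_mul, mul_one]
        rw [hmid, hEF]
        abel

def εval : DJGen N → ℂ
  | .K _ => 1
  | .Kb _ => 1
  | .e _ => 0
  | .f _ => 0

def εF : FreeAlgebra ℂ (DJGen N) →ₐ[ℂ] ℂ := FreeAlgebra.lift ℂ εval

lemma εF_g (x : DJGen N) : εF (N := N) (g x) = εval x := by simp [εF, g]

lemma εF_rel {a b : FreeAlgebra ℂ (DJGen N)} (h : djRel N p pb a b) :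
    εF a = εF b := by
  induction h with
  | ef i j =>
      rcases eq_or_ne i j with hij | hij
      · subst hij
        rw [if_pos rfl]
        simp [map_sub, map_mul, εF_g, εval]
      · rw [if_neg hij]
        simp [map_sub, map_mul, εF_g, εval]
  | _ => simp [map_mul, map_smul, εF_g, εval]

def Δ0 : DJAlg N p pb →ₐ[ℂ] DJAlg N p pb ⊗[ℂ] DJAlg N p pb :=
  RingQuot.liftAlgHom ℂ ⟨ΔF p pb, fun _ _ h => ΔF_rel p pb hcomp h⟩

def ε0 : DJAlg N p pb →ₐ[ℂ] ℂ :=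
  RingQuot.liftAlgHom ℂ ⟨εF, fun _ _ h => εF_rel p pb h⟩

lemma Δ0_gen (x : DJGen N) : Δ0 p pb hcomp (gen p pb x) = dval p pb x := by
  rw [gen, Δ0, RingQuot.liftAlgHom_mkAlgHom_apply, ΔF_g]

lemma ε0_gen (x : DJGen N) : ε0 p pb (gen p pb x) = εval x := by
  rw [gen, ε0, RingQuot.liftAlgHom_mkAlgHom_apply, εF_g]

end DJaux

/-- `Δ` takes the prescribed values on the generators. -/
def IsComul {N : ℕ} (p pb : Fin N → Fin N → ℂ)
    (Δ : DJAlg N p pb →ₐ[ℂ] DJAlg N p pb ⊗[ℂ] DJAlg N p pb) : Prop :=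
  (∀ i, Δ (gen p pb (.K i)) = gen p pb (.K i) ⊗ₜ[ℂ] gen p pb (.K i)) ∧
  (∀ i, Δ (gen p pb (.Kb i)) = gen p pb (.Kb i) ⊗ₜ[ℂ] gen p pb (.Kb i)) ∧
  (∀ i, Δ (gen p pb (.e i)) = 1 ⊗ₜ[ℂ] gen p pb (.e i) + gen p pb (.e i) ⊗ₜ[ℂ] gen p pb (.K i)) ∧
  (∀ i, Δ (gen p pb (.f i)) = gen p pb (.Kb i) ⊗ₜ[ℂ] gen p pb (.f i) + gen p pb (.f i) ⊗ₜ[ℂ] 1)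

/-- `ε` takes the prescribed values on the generators. -/
def IsCounit {N : ℕ} (p pb : Fin N → Fin N → ℂ) (ε : DJAlg N p pb →ₐ[ℂ] ℂ) : Prop :=
  (∀ i, ε (gen p pb (.K i)) = 1) ∧ (∀ i, ε (gen p pb (.Kb i)) = 1) ∧
  (∀ i, ε (gen p pb (.e i)) = 0) ∧ (∀ i, ε (gen p pb (.f i)) = 0)

/-- For nonzero parameter systems `p, p̄` with `p_{ij} p̄_{ji} = 1`, the
generalized Drinfel'd–Jimbo algebra `A` carries a unique comultiplication `Δ` and a
unique counit `ε` taking the prescribed values on the generators, `Δ` is coassociative,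
and `ε` satisfies the counit laws. -/
theorem stmt13 (N : ℕ) (hN : 1 ≤ N) (p pb : Fin N → Fin N → ℂ)
    (hp : ∀ i j, p i j ≠ 0) (hpb : ∀ i j, pb i j ≠ 0)
    (hcomp : ∀ i j, p i j * pb j i = 1) :
    (∃! Δ : DJAlg N p pb →ₐ[ℂ] DJAlg N p pb ⊗[ℂ] DJAlg N p pb, IsComul p pb Δ) ∧
    (∃! ε : DJAlg N p pb →ₐ[ℂ] ℂ, IsCounit p pb ε) ∧
    (∀ (Δ : DJAlg N p pb →ₐ[ℂ] DJAlg N p pb ⊗[ℂ] DJAlg N p pb)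
        (ε : DJAlg N p pb →ₐ[ℂ] ℂ), IsComul p pb Δ → IsCounit p pb ε →
      (∀ x : DJAlg N p pb,
        Algebra.TensorProduct.assoc ℂ ℂ ℂ (DJAlg N p pb) (DJAlg N p pb) (DJAlg N p pb)
            (Algebra.TensorProduct.map Δ (AlgHom.id ℂ (DJAlg N p pb)) (Δ x)) =
          Algebra.TensorProduct.map (AlgHom.id ℂ (DJAlg N p pb)) Δ (Δ x)) ∧
      (∀ x : DJAlg N p pb,
        Algebra.TensorProduct.lid ℂ (DJAlg N p pb)
            (Algebra.TensorProduct.map ε (AlgHom.id ℂ (DJAlg N p pb)) (Δ x)) = x) ∧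
      (∀ x : DJAlg N p pb,
        Algebra.TensorProduct.rid ℂ ℂ (DJAlg N p pb)
            (Algebra.TensorProduct.map (AlgHom.id ℂ (DJAlg N p pb)) ε (Δ x)) = x)) := by
  classical
  have hC : ∀ (Δ : DJAlg N p pb →ₐ[ℂ] DJAlg N p pb ⊗[ℂ] DJAlg N p pb)
        (ε : DJAlg N p pb →ₐ[ℂ] ℂ), IsComul p pb Δ → IsCounit p pb ε →
      (∀ x : DJAlg N p pb,
        Algebra.TensorProduct.assoc ℂ ℂ ℂ (DJAlg N p pb) (DJAlg N p pb) (DJAlg N p pb)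
            (Algebra.TensorProduct.map Δ (AlgHom.id ℂ (DJAlg N p pb)) (Δ x)) =
          Algebra.TensorProduct.map (AlgHom.id ℂ (DJAlg N p pb)) Δ (Δ x)) ∧
      (∀ x : DJAlg N p pb,
        Algebra.TensorProduct.lid ℂ (DJAlg N p pb)
            (Algebra.TensorProduct.map ε (AlgHom.id ℂ (DJAlg N p pb)) (Δ x)) = x) ∧
      (∀ x : DJAlg N p pb,
        Algebra.TensorProduct.rid ℂ ℂ (DJAlg N p pb)
            (Algebra.TensorProduct.map (AlgHom.id ℂ (DJAlg N p pb)) ε (Δ x)) = x) := by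
    rintro Δ ε ⟨hK, hKb, he, hf⟩ ⟨eK, eKb, ee, ef⟩
    refine ⟨?_, ?_, ?_⟩
    · have h : ((Algebra.TensorProduct.assoc ℂ ℂ ℂ (DJAlg N p pb) (DJAlg N p pb)
            (DJAlg N p pb)).toAlgHom.comp
          ((Algebra.TensorProduct.map Δ (AlgHom.id ℂ (DJAlg N p pb))).comp Δ)) =
          (Algebra.TensorProduct.map (AlgHom.id ℂ (DJAlg N p pb)) Δ).comp Δ := by
        apply DJaux.hom_ext p pb
        intro x
        cases x with
        | K i =>
            simp [hK, Algebra.TensorProduct.assoc_tmul]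
        | Kb i =>
            simp [hKb, Algebra.TensorProduct.assoc_tmul]
        | e i =>
            simp [hK, he, Algebra.TensorProduct.one_def, Algebra.TensorProduct.assoc_tmul, TensorProduct.tmul_add,
              TensorProduct.add_tmul, add_assoc]
        | f i =>
            simp [hKb, hf, Algebra.TensorProduct.one_def, Algebra.TensorProduct.assoc_tmul, TensorProduct.tmul_add,
              TensorProduct.add_tmul, add_assoc]
      intro x
      simpa using AlgHom.congr_fun h x
    · have h : ((Algebra.TensorProduct.lid ℂ (DJAlg N p pb)).toAlgHom.comp
          ((Algebra.TensorProduct.map ε (AlgHom.id ℂ (DJAlg N p pb))).comp Δ)) =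
          AlgHom.id ℂ (DJAlg N p pb) := by
        apply DJaux.hom_ext p pb
        intro x
        cases x with
        | K i => simp [hK, eK]
        | Kb i => simp [hKb, eKb]
        | e i => simp [hK, he, ee, TensorProduct.tmul_add, TensorProduct.add_tmul]
        | f i => simp [hKb, hf, ef, eKb, TensorProduct.tmul_add, TensorProduct.add_tmul]
      intro x
      simpa using AlgHom.congr_fun h x
    · have h : ((Algebra.TensorProduct.rid ℂ ℂ (DJAlg N p pb)).toAlgHom.comp
          ((Algebra.TensorProduct.map (AlgHom.id ℂ (DJAlg N p pb)) ε).comp Δ)) =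
          AlgHom.id ℂ (DJAlg N p pb) := by
        apply DJaux.hom_ext p pb
        intro x
        cases x with
        | K i => simp [hK, eK]
        | Kb i => simp [hKb, eKb]
        | e i => simp [hK, he, ee, eK, TensorProduct.tmul_add, TensorProduct.add_tmul]
        | f i => simp [hKb, hf, ef, TensorProduct.tmul_add, TensorProduct.add_tmul]
      intro x
      simpa using AlgHom.congr_fun h x
  refine ⟨⟨DJaux.Δ0 p pb hcomp, ?_, ?_⟩, ⟨DJaux.ε0 p pb, ?_, ?_⟩, hC⟩
  · exact ⟨fun i => by rw [DJaux.Δ0_gen]; rfl, fun i => by rw [DJaux.Δ0_gen]; rfl,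
      fun i => by rw [DJaux.Δ0_gen]; rfl, fun i => by rw [DJaux.Δ0_gen]; rfl⟩
  · rintro Δ' ⟨hK, hKb, he, hf⟩
    apply DJaux.hom_ext p pb
    intro x
    cases x with
    | K i => rw [hK, DJaux.Δ0_gen]; rfl
    | Kb i => rw [hKb, DJaux.Δ0_gen]; rfl
    | e i => rw [he, DJaux.Δ0_gen]; rfl
    | f i => rw [hf, DJaux.Δ0_gen]; rfl
  · exact ⟨fun i => by rw [DJaux.ε0_gen]; rfl, fun i => by rw [DJaux.ε0_gen]; rfl,
      fun i => by rw [DJaux.ε0_gen]; rfl, fun i => by rw [DJaux.ε0_gen]; rfl⟩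
  · rintro ε' ⟨hK, hKb, he, hf⟩
    apply DJaux.hom_ext p pb
    intro x
    cases x with
    | K i => rw [hK, DJaux.ε0_gen]; rfl
    | Kb i => rw [hKb, DJaux.ε0_gen]; rfl
    | e i => rw [he, DJaux.ε0_gen]; rfl
    | f i => rw [hf, DJaux.ε0_gen]; rfl


end
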